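/- Let p(z) be a complex polynomial of degree n having k pairwise distinct zeros z_1,...,z_k (1 ≤ k ≤ n) in the closed unit disc |z| ≤ 1. Then the (k-1)-th derivative p^{(k-1)}(z) has at least one zero in the open disc |z| < 2(n-k+1)/ln 2. -/

import Mathlib

set_option maxHeartbeats 4000000

open Polynomial Finset

noncomputable def kakZ (l : List ℂ) : ℂ[X] := (l.map fun a => X - C a).prod

lemma kakZ_nil : kakZ [] = 1 := rfl

lemma kakZ_cons (a : ℂ) (l : List ℂ) : kakZ (a :: l) = (X - C a) * kakZ l := by
  simp [kakZ]

lemma kakZ_monic (l : List ℂ) : (kakZ l).Monic := by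
  induction l with
  | nil => exact monic_one
  | cons a l ih => rw [kakZ_cons]; exact (monic_X_sub_C a).mul ih

lemma kakZ_natDegree (l : List ℂ) : (kakZ l).natDegree = l.length := by
  induction l with
  | nil => simp [kakZ_nil]
  | cons a l ih =>
    rw [kakZ_cons, (monic_X_sub_C a).natDegree_mul (kakZ_monic l), ih, natDegree_X_sub_C]
    simp [List.length_cons, add_comm]

lemma kakZ_degree (l : List ℂ) : (kakZ l).degree = l.length := by
  rw [Polynomial.degree_eq_natDegree (kakZ_monic l).ne_zero, kakZ_natDegree]

noncomputable def kphi (l : List ℂ) (d : ℕ) : ℂ := ((X ^ d %ₘ kakZ l).coeff (l.length - 1))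

lemma kphi_nil (d : ℕ) : kphi [] d = 0 := by
  simp [kphi, kakZ_nil, Polynomial.modByMonic_one]

lemma kphi_of_lt {l : List ℂ} {d : ℕ} (h : d + 1 < l.length) : kphi l d = 0 := by
  unfold kphi
  rw [(modByMonic_eq_self_iff (kakZ_monic l)).2]
  · rw [coeff_X_pow]
    simp only [if_neg (by omega : ¬ l.length - 1 = d)]
  · rw [kakZ_degree, degree_X_pow]
    exact_mod_cast by omega

lemma kphi_top {l : List ℂ} (h : l ≠ []) : kphi l (l.length - 1) = 1 := by
  have hl : 1 ≤ l.length := List.length_pos_iff.mpr h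
  unfold kphi
  rw [(modByMonic_eq_self_iff (kakZ_monic l)).2]
  · rw [coeff_X_pow]; simp
  · rw [kakZ_degree, degree_X_pow]
    exact_mod_cast by omega

lemma kquot_rec (l : List ℂ) (d : ℕ) :
    X ^ (d + 1) /ₘ kakZ l = X * (X ^ d /ₘ kakZ l) + C (kphi l d) := by
  rcases eq_or_ne l [] with rfl | hl
  · rw [kakZ_nil, kphi_nil]
    simp [Polynomial.divByMonic_one, pow_succ, mul_comm]
  · have hk : 1 ≤ l.length := List.length_pos_iff.mpr hl
    have hmon := kakZ_monic l
    set Z := kakZ l with hZ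
    set r := X ^ d %ₘ Z with hr
    set Q := X ^ d /ₘ Z with hQ
    have key := Polynomial.div_modByMonic_unique (f := X ^ (d + 1)) (g := Z)
      (X * Q + C (kphi l d)) (X * r - C (kphi l d) * Z) hmon ?_
    · exact key.1
    constructor
    · have h1 : X ^ d = r + Z * Q := (modByMonic_add_div _ _).symm
      calc X * r - C (kphi l d) * Z + Z * (X * Q + C (kphi l d))
          = X * (r + Z * Q) := by ring
        _ = X ^ (d + 1) := by rw [← h1]; ring
    · rw [hZ, kakZ_degree, Polynomial.degree_lt_iff_coeff_zero]
      intro m hm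
      have hm' : l.length ≤ m := by exact_mod_cast hm
      obtain ⟨m', rfl⟩ : ∃ m', m = m' + 1 := ⟨m - 1, by omega⟩
      rw [coeff_sub, coeff_X_mul, coeff_C_mul]
      rcases eq_or_lt_of_le hm' with heq | hlt
      · have hm'' : m' = l.length - 1 := by omega
        have hzc : Z.coeff (m' + 1) = 1 := by
          have := hmon.coeff_natDegree
          rwa [hZ, kakZ_natDegree, heq] at this
        rw [hzc, hm'']
        show kphi l d - kphi l d * 1 = 0
        ring
      · have hzc : Z.coeff (m' + 1) = 0 := by
          apply coeff_eq_zero_of_natDegree_lt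
          rw [hZ, kakZ_natDegree]; omega
        have hrc : r.coeff m' = 0 := by
          apply coeff_eq_zero_of_degree_lt
          refine lt_of_lt_of_le (degree_modByMonic_lt _ hmon) ?_
          rw [hZ, kakZ_degree]
          exact_mod_cast by omega
        rw [hzc, hrc]; ring

lemma kphi_cons (a : ℂ) (l : List ℂ) (d : ℕ) :
    kphi (a :: l) d = (X ^ d /ₘ kakZ l).eval a := by
  have hmon := kakZ_monic l
  have hmon' : (X - C a).Monic := monic_X_sub_C a
  set Z := kakZ l with hZ
  set r := X ^ d %ₘ Z with hr
  set Q := X ^ d /ₘ Z with hQ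
  have h2 : (X ^ d) %ₘ kakZ (a :: l) = C (Q.eval a) * Z + r := by
    have key := Polynomial.div_modByMonic_unique (f := X ^ d) (g := kakZ (a :: l))
      (Q /ₘ (X - C a)) (C (Q.eval a) * Z + r) (kakZ_monic (a :: l)) ?_
    · exact key.2
    constructor
    · have h1 : X ^ d = r + Z * Q := (modByMonic_add_div _ _).symm
      have h3 : Q = (X - C a) * (Q /ₘ (X - C a)) + C (Q.eval a) := by
        conv_lhs => rw [← modByMonic_add_div Q (X - C a)]
        rw [modByMonic_X_sub_C_eq_C_eval]
        ring
      rw [kakZ_cons]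
      calc C (Q.eval a) * Z + r + (X - C a) * Z * (Q /ₘ (X - C a))
          = r + Z * ((X - C a) * (Q /ₘ (X - C a)) + C (Q.eval a)) := by ring
        _ = r + Z * Q := by rw [← h3]
        _ = X ^ d := h1.symm
    · rw [kakZ_degree, List.length_cons]
      apply lt_of_le_of_lt (degree_add_le _ _)
      rw [max_lt_iff]
      constructor
      · apply lt_of_le_of_lt (degree_mul_le _ _)
        apply lt_of_le_of_lt (add_le_add_left degree_C_le _)
        rw [zero_add, hZ, kakZ_degree]
        exact_mod_cast by omega
      · refine lt_of_lt_of_le (degree_modByMonic_lt _ hmon) ?_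
        rw [hZ, kakZ_degree]
        exact_mod_cast by omega
  rw [kphi, h2, List.length_cons, Nat.add_sub_cancel, coeff_add, coeff_C_mul]
  have hzc : Z.coeff l.length = 1 := by
    have := hmon.coeff_natDegree
    rwa [hZ, kakZ_natDegree] at this
  have hrc : r.coeff l.length = 0 := by
    apply coeff_eq_zero_of_degree_lt
    refine lt_of_lt_of_le (degree_modByMonic_lt _ hmon) ?_
    rw [hZ, kakZ_degree]
  rw [hzc, hrc, mul_one, add_zero]

lemma kphi_rec (a : ℂ) (l : List ℂ) (d : ℕ) :
    kphi (a :: l) (d + 1) = a * kphi (a :: l) d + kphi l d := by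
  rw [kphi_cons, kphi_cons, kquot_rec]
  simp

lemma kphi_bound : ∀ (l : List ℂ), l ≠ [] → (∀ x ∈ l, ‖x‖ ≤ 1) → ∀ d : ℕ,
    ‖kphi l d‖ ≤ (d.choose (l.length - 1) : ℝ) := by
  intro l
  induction l with
  | nil => intro h; exact absurd rfl h
  | cons a l ih =>
    intro _ hb d
    have ha : ‖a‖ ≤ 1 := hb a (List.mem_cons_self)
    have hb' : ∀ x ∈ l, ‖x‖ ≤ 1 := fun x hx => hb x (List.mem_cons_of_mem a hx)
    rw [List.length_cons, Nat.add_sub_cancel]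
    induction d with
    | zero =>
      rcases eq_or_ne l [] with rfl | hl
      · have : kphi [a] 0 = 1 := kphi_top (by simp)
        simp [this]
      · have hlen : 1 ≤ l.length := List.length_pos_iff.mpr hl
        rw [kphi_of_lt (by simp only [List.length_cons]; omega)]
        simp
    | succ d ihd =>
      rw [kphi_rec]
      refine le_trans (norm_add_le _ _) ?_
      rw [norm_mul]
      rcases eq_or_ne l [] with rfl | hl
      · rw [kphi_nil]
        simp only [List.length_nil, Nat.choose_zero_right, norm_zero, add_zero]
        calc ‖a‖ * ‖kphi [a] d‖ ≤ 1 * 1 := by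
              refine mul_le_mul ha ?_ (by positivity) (by norm_num)
              simpa using ihd
          _ = ((d+1).choose 0 : ℝ) := by simp
      · obtain ⟨s, hs⟩ : ∃ s, l.length = s + 1 :=
          ⟨l.length - 1, by have := List.length_pos_iff.mpr hl; omega⟩
        have h1 : ‖a‖ * ‖kphi (a :: l) d‖ ≤ (d.choose l.length : ℝ) := by
          calc ‖a‖ * ‖kphi (a :: l) d‖
              ≤ 1 * (d.choose l.length : ℝ) := by
                refine mul_le_mul ha ihd (by positivity) (by norm_num)
            _ = _ := one_mul _
        have h2 : ‖kphi l d‖ ≤ (d.choose (l.length - 1) : ℝ) := ih hl hb' d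
        refine le_trans (add_le_add h1 h2) ?_
        rw [hs]
        simp only [Nat.add_sub_cancel]
        rw [← Nat.cast_add]
        exact_mod_cast le_of_eq (by rw [Nat.choose_succ_succ, add_comm])

lemma kphi_expand (l : List ℂ) (p : ℂ[X]) (N : ℕ) (h : p.natDegree < N) :
    (p %ₘ kakZ l).coeff (l.length - 1) = ∑ d ∈ range N, p.coeff d * kphi l d := by
  conv_lhs => rw [p.as_sum_range' N h]
  have key : (∑ i ∈ range N, (monomial i) (p.coeff i)) %ₘ kakZ l
      = ∑ i ∈ range N, (p.coeff i) • (X ^ i %ₘ kakZ l) := by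
    rw [← Polynomial.modByMonicHom_apply, map_sum]
    refine Finset.sum_congr rfl fun i _ => ?_
    rw [← Polynomial.smul_X_eq_monomial, map_smul, Polynomial.modByMonicHom_apply]
  rw [key, finset_sum_coeff]
  refine Finset.sum_congr rfl fun i _ => ?_
  rw [Polynomial.coeff_smul, smul_eq_mul, kphi]

lemma kak_coeffsum_le (t : Multiset ℂ) :
    ∑ r ∈ range (Multiset.card t + 1),
        ‖((t.map fun w => X - C w).prod).coeff r‖
      ≤ (t.map fun w => 1 + ‖w‖).prod := by
  induction t using Multiset.induction_on with
  | empty => simp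
  | cons a t ih =>
    rw [Multiset.map_cons, Multiset.prod_cons, Multiset.map_cons, Multiset.prod_cons,
      Multiset.card_cons]
    set P : ℂ[X] := (t.map fun w => X - C w).prod with hP
    set c := Multiset.card t with hc
    have hdegP : P.natDegree = c := natDegree_multiset_prod_X_sub_C_eq_card t
    have htop : P.coeff (c + 1) = 0 :=
      coeff_eq_zero_of_natDegree_lt (by omega)
    set S := ∑ r ∈ range (c + 1), ‖P.coeff r‖ with hS
    have key : ∑ r ∈ range (c + 1 + 1), ‖((X - C a) * P).coeff r‖
        ≤ (1 + ‖a‖) * S := by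
      rw [Finset.sum_range_succ']
      have hc0 : ((X - C a) * P).coeff 0 = -(a * P.coeff 0) := by
        rw [sub_mul, coeff_sub, coeff_C_mul, Polynomial.mul_coeff_zero, coeff_X_zero,
          zero_mul, zero_sub]
      have hci : ∀ i, ((X - C a) * P).coeff (i + 1) = P.coeff i - a * P.coeff (i + 1) := by
        intro i
        rw [sub_mul, coeff_sub, coeff_C_mul, coeff_X_mul]
      have step1 : (∑ i ∈ range (c + 1), ‖((X - C a) * P).coeff (i + 1)‖)
            + ‖((X - C a) * P).coeff 0‖
          ≤ (∑ i ∈ range (c + 1),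
              (‖P.coeff i‖ + ‖a‖ * ‖P.coeff (i + 1)‖))
            + ‖a‖ * ‖P.coeff 0‖ := by
            refine add_le_add (Finset.sum_le_sum fun i _ => ?_) ?_
            · rw [hci i]
              refine le_trans (norm_sub_le _ _) ?_
              rw [norm_mul]
            · rw [hc0, norm_neg, norm_mul]
      refine le_trans step1 ?_
      have e1 : (∑ i ∈ range (c + 1),
              (‖P.coeff i‖ + ‖a‖ * ‖P.coeff (i + 1)‖))
            + ‖a‖ * ‖P.coeff 0‖
          = S + ‖a‖ *
              ((∑ i ∈ range (c + 1), ‖P.coeff (i + 1)‖) + ‖P.coeff 0‖) := by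
        rw [Finset.sum_add_distrib, ← Finset.mul_sum, hS]
        ring
      have e2 : (∑ i ∈ range (c + 1), ‖P.coeff (i + 1)‖) + ‖P.coeff 0‖
          = ∑ r ∈ range (c + 1 + 1), ‖P.coeff r‖ :=
        (Finset.sum_range_succ' (fun r => ‖P.coeff r‖) (c + 1)).symm
      have e3 : ∑ r ∈ range (c + 1 + 1), ‖P.coeff r‖ = S := by
        rw [Finset.sum_range_succ, htop, hS]
        simp
      rw [e1, e2, e3]
      have : (0:ℝ) ≤ ‖a‖ * S := by
        have h0 : (0:ℝ) ≤ S := by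
          rw [hS]; exact Finset.sum_nonneg fun i _ => norm_nonneg _
        exact mul_nonneg (norm_nonneg a) h0
      nlinarith [norm_nonneg a, (by rw [hS]; exact Finset.sum_nonneg fun i _ => norm_nonneg _ : (0:ℝ) ≤ S)]
    refine le_trans key ?_
    refine mul_le_mul_of_nonneg_left ih ?_
    have : (0:ℝ) ≤ ‖a‖ := norm_nonneg a
    linarith

lemma kak_coeff_zero_abs (t : Multiset ℂ) :
    ‖((t.map fun w => X - C w).prod).coeff 0‖
      = (t.map fun w => ‖w‖).prod := by
  rw [Polynomial.coeff_zero_eq_eval_zero, Polynomial.eval_multiset_prod, Multiset.map_map,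
    (map_multiset_prod (normHom : ℂ →*₀ ℝ) _ : ‖_‖ = _), Multiset.map_map]
  congr 1
  refine Multiset.map_congr rfl fun w _ => ?_
  simp

lemma kak_prod_bound (t : Multiset ℂ) (R : ℝ) (hR : 0 < R)
    (h : ∀ w ∈ t, R ≤ ‖w‖) :
    (t.map fun w => 1 + ‖w‖).prod
      ≤ (1 + 1 / R) ^ Multiset.card t * (t.map fun w => ‖w‖).prod := by
  induction t using Multiset.induction_on with
  | empty => simp
  | cons a t ih =>
    have ha : R ≤ ‖a‖ := h a (Multiset.mem_cons_self a t)
    have ih' := ih fun w hw => h w (Multiset.mem_cons_of_mem hw)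
    rw [Multiset.map_cons, Multiset.prod_cons, Multiset.map_cons, Multiset.prod_cons,
      Multiset.card_cons, pow_succ]
    have h1 : 1 + ‖a‖ ≤ (1 + 1 / R) * ‖a‖ := by
      have : (1:ℝ) ≤ ‖a‖ / R := (one_le_div hR).mpr ha
      have h2 : ‖a‖ / R = ‖a‖ * (1/R) := by ring
      calc 1 + ‖a‖ ≤ ‖a‖ / R + ‖a‖ := by linarith
        _ = (1 + 1/R) * ‖a‖ := by ring
    calc (1 + ‖a‖) * (t.map fun w => 1 + ‖w‖).prod
        ≤ ((1 + 1 / R) * ‖a‖) *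
            ((1 + 1 / R) ^ Multiset.card t * (t.map fun w => ‖w‖).prod) := by
          refine mul_le_mul h1 ih' ?_ ?_
          · refine Multiset.prod_nonneg fun x hx => ?_
            obtain ⟨w, hw, rfl⟩ := Multiset.mem_map.mp hx
            positivity
          · have := norm_nonneg a
            have h1R : (0:ℝ) ≤ 1 + 1/R := by positivity
            positivity
      _ = (1 + 1 / R) ^ Multiset.card t * (1 + 1 / R) *
            (‖a‖ * (t.map fun w => ‖w‖).prod) := by ring

lemma kak_prod_abs_pos (t : Multiset ℂ) (R : ℝ) (hR : 0 < R)
    (h : ∀ w ∈ t, R ≤ ‖w‖) :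
    0 < (t.map fun w => ‖w‖).prod := by
  refine Multiset.prod_pos fun x hx => ?_
  obtain ⟨w, hw, rfl⟩ := Multiset.mem_map.mp hx
  exact lt_of_lt_of_le hR (h w hw)


lemma kak_roots_side (q : ℂ[X]) (m : ℕ) (hq0 : q ≠ 0) (hdeg : q.natDegree = m)
    (R : ℝ) (hRpos : 0 < R) (hlt : (1 + 1/R)^m < 2)
    (htR : ∀ w : ℂ, q.IsRoot w → R ≤ ‖w‖)
    (hmain : ‖q.coeff 0‖ ≤ ∑ i ∈ Finset.range m, ‖q.coeff (i+1)‖) :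
    False := by
  have hcard : Multiset.card q.roots = m := by
    rw [← hdeg]
    exact Polynomial.splits_iff_card_roots.mp (IsAlgClosed.splits q)
  have htR' : ∀ w ∈ q.roots, R ≤ ‖w‖ := fun w hw =>
    htR w (Polynomial.isRoot_of_mem_roots hw)
  have hc0 : q.leadingCoeff ≠ 0 := Polynomial.leadingCoeff_ne_zero.mpr hq0
  have hcabs : 0 < ‖q.leadingCoeff‖ := norm_pos_iff.mpr hc0
  have hfact : C q.leadingCoeff * (q.roots.map fun w => X - C w).prod = q :=
    C_leadingCoeff_mul_prod_multiset_X_sub_C (by rw [hcard, hdeg])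
  have hca := kak_coeffsum_le q.roots
  have hz0 := kak_coeff_zero_abs q.roots
  have hb := kak_prod_bound q.roots R hRpos htR'
  have hpos := kak_prod_abs_pos q.roots R hRpos htR'
  rw [hcard] at hca hb
  obtain ⟨W, hW⟩ : ∃ W, ((q.roots.map fun w => X - C w).prod) = W := ⟨_, rfl⟩
  obtain ⟨Pa, hPa⟩ : ∃ x, ((q.roots.map fun w => ‖w‖).prod) = x := ⟨_, rfl⟩
  obtain ⟨Pp, hPp⟩ : ∃ x, ((q.roots.map fun w => 1 + ‖w‖).prod) = x := ⟨_, rfl⟩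
  rw [hW, hPp] at hca
  rw [hW, hPa] at hz0
  rw [hPa, hPp] at hb
  rw [hPa] at hpos
  rw [hW] at hfact
  have hqcoeff : ∀ r, q.coeff r = q.leadingCoeff * W.coeff r := fun r => by
    conv_lhs => rw [← hfact]
    rw [coeff_C_mul]
  have he1 : ‖q.coeff 0‖ = ‖q.leadingCoeff‖ * Pa := by
    rw [hqcoeff 0, norm_mul, hz0]
  have hs := Finset.sum_range_succ' (fun r => ‖W.coeff r‖) m
  rw [hz0] at hs
  have he2 : ∑ i ∈ Finset.range m, ‖q.coeff (i+1)‖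
      = ‖q.leadingCoeff‖ * ((∑ r ∈ Finset.range (m+1), ‖W.coeff r‖) - Pa) := by
    have h3 : ∑ i ∈ Finset.range m, ‖q.coeff (i+1)‖
        = ‖q.leadingCoeff‖ * ∑ i ∈ Finset.range m, ‖W.coeff (i+1)‖ := by
      rw [Finset.mul_sum]
      exact Finset.sum_congr rfl fun i _ => by rw [hqcoeff (i+1), norm_mul]
    have h4 : (∑ i ∈ Finset.range m, ‖W.coeff (i+1)‖)
        = (∑ r ∈ Finset.range (m+1), ‖W.coeff r‖) - Pa := by
      linarith [hs]
    rw [h3, h4]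
  have hlast : ‖q.leadingCoeff‖ * Pa < ‖q.leadingCoeff‖ * Pa := by
    calc ‖q.leadingCoeff‖ * Pa = ‖q.coeff 0‖ := he1.symm
      _ ≤ ∑ i ∈ Finset.range m, ‖q.coeff (i+1)‖ := hmain
      _ = ‖q.leadingCoeff‖ * ((∑ r ∈ Finset.range (m+1), ‖W.coeff r‖) - Pa) := he2
      _ < ‖q.leadingCoeff‖ * Pa := by
          refine mul_lt_mul_of_pos_left ?_ hcabs
          have h6 : (1+1/R)^m * Pa < 2 * Pa := mul_lt_mul_of_pos_right hlt hpos
          linarith [hca, hb]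
  exact lt_irrefl _ hlast

theorem kakeya_open_disc (n k : ℕ) (hn : 1 ≤ n) (hk1 : 1 ≤ k) (hkn : k ≤ n)
    (p : Polynomial ℂ) (hp : p.natDegree = n)
    (z : Fin k → ℂ) (hinj : Function.Injective z)
    (hz : ∀ i, ‖z i‖ ≤ 1) (hroot : ∀ i, p.IsRoot (z i)) :
    ∃ w : ℂ, (derivative^[k - 1] p).IsRoot w ∧
      ‖w‖ < 2 * ((n : ℝ) - k + 1) / Real.log 2 := by
  by_contra hcon
  push_neg at hcon
  obtain ⟨j, rfl⟩ : ∃ j, k = j + 1 := ⟨k - 1, by omega⟩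
  simp only [Nat.add_sub_cancel] at hcon ⊢
  set q := derivative^[j] p with hq
  set m := n - j with hm
  have hjn : j ≤ n := by omega
  have hm1 : 1 ≤ m := by omega
  have hmj : m + j = n := by omega
  have hlog2 : (0:ℝ) < Real.log 2 := Real.log_pos (by norm_num)
  set R : ℝ := 2 * ((n : ℝ) - ((j+1 : ℕ) : ℝ) + 1) / Real.log 2 with hR
  have hcast : ((n:ℝ) - ((j+1 : ℕ) : ℝ) + 1) = (m:ℝ) := by
    rw [hm, Nat.cast_sub hjn]
    push_cast
    ring
  have hRpos : 0 < R := by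
    rw [hR, hcast]
    have : (0:ℝ) < (m:ℝ) := by exact_mod_cast hm1
    positivity
  have hp0 : p ≠ 0 := fun h => by rw [h, natDegree_zero] at hp; omega
  have hpn : p.coeff n ≠ 0 := by
    rw [← hp]
    exact (Polynomial.leadingCoeff_ne_zero).mpr hp0
  have hqm : q.coeff m = (n.descFactorial j : ℂ) * p.coeff n := by
    have h1 := Polynomial.coeff_iterate_derivative (k := j) p m
    rw [hmj] at h1
    rw [hq, h1, nsmul_eq_mul]
  have hdesc0 : n.descFactorial j ≠ 0 := by
    intro h
    rw [Nat.descFactorial_eq_zero_iff_lt] at h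
    omega
  have hqmne : q.coeff m ≠ 0 := by
    rw [hqm]
    exact mul_ne_zero (Nat.cast_ne_zero.mpr hdesc0) hpn
  have hq0 : q ≠ 0 := fun h => hqmne (by rw [h, coeff_zero])
  have hqdeg : q.natDegree = m := by
    refine le_antisymm ?_ (Polynomial.le_natDegree_of_ne_zero hqmne)
    have := Polynomial.natDegree_iterate_derivative p j
    rwa [hp] at this
  -- list of nodes
  set l := List.ofFn z with hl
  have hlen : l.length = j + 1 := List.length_ofFn (f := z)
  have hlne : l ≠ [] := by
    intro h
    rw [h] at hlen
    simp at hlen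
  have hnodup : l.Nodup := List.nodup_ofFn.mpr hinj
  have habs : ∀ x ∈ l, ‖x‖ ≤ 1 := by
    intro x hx
    obtain ⟨i, rfl⟩ := Set.mem_range.mp ((List.mem_ofFn' z x).mp hx)
    exact hz i
  have hdvd : kakZ l ∣ p := by
    have heq : kakZ l = (Multiset.map (fun a => X - C a) (↑l : Multiset ℂ)).prod := by
      rw [kakZ, Multiset.map_coe, Multiset.prod_coe]
    rw [heq, Multiset.prod_X_sub_C_dvd_iff_le_roots hp0, Multiset.le_iff_count]
    intro a
    by_cases hal : a ∈ l
    · have h1 : Multiset.count a (↑l : Multiset ℂ) = 1 :=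
        Multiset.count_eq_one_of_mem (by exact_mod_cast hnodup) (by exact_mod_cast hal)
      rw [h1, Polynomial.count_roots]
      refine (Polynomial.rootMultiplicity_pos hp0).mpr ?_
      obtain ⟨i, rfl⟩ := Set.mem_range.mp ((List.mem_ofFn' z a).mp hal)
      exact hroot i
    · rw [Multiset.count_eq_zero_of_notMem (by exact_mod_cast hal)]
      exact Nat.zero_le _
  have hmod : p %ₘ kakZ l = 0 := (modByMonic_eq_zero_iff_dvd (kakZ_monic l)).mpr hdvd
  have hexp : (0:ℂ) = ∑ d ∈ range (n+1), p.coeff d * kphi l d := by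
    have h1 := kphi_expand l p (n+1) (by omega)
    rw [hmod, coeff_zero] at h1
    exact h1
  have hsplit : (0:ℂ) = ∑ r ∈ range (m+1), p.coeff (j + r) * kphi l (j + r) := by
    rw [hexp]
    have hn1 : n + 1 = j + (m + 1) := by omega
    rw [hn1, Finset.sum_range_add]
    have hz0 : ∑ i ∈ range j, p.coeff i * kphi l i = 0 :=
      Finset.sum_eq_zero fun i hi => by
        rw [kphi_of_lt (by rw [hlen]; have := Finset.mem_range.mp hi; omega), mul_zero]
    rw [hz0, zero_add]
  have htopphi : kphi l j = 1 := by
    have h1 := kphi_top hlne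
    rwa [hlen, Nat.add_sub_cancel] at h1
  have hiso : p.coeff j = - ∑ i ∈ range m, p.coeff (j + (i+1)) * kphi l (j + (i+1)) := by
    rw [Finset.sum_range_succ' (fun r => p.coeff (j + r) * kphi l (j + r)) m] at hsplit
    simp only [add_zero, htopphi, mul_one] at hsplit
    exact eq_neg_of_add_eq_zero_right hsplit.symm
  -- absolute value bound on p-coefficients
  have hphib : ∀ d, ‖kphi l d‖ ≤ ((d.choose j : ℕ) : ℝ) := by
    intro d
    have := kphi_bound l hlne habs d
    rwa [hlen, Nat.add_sub_cancel] at this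
  have habs1 : ‖p.coeff j‖
      ≤ ∑ i ∈ range m, ‖p.coeff (j + (i+1))‖ * (((j + (i+1)).choose j : ℕ) : ℝ) := by
    rw [hiso, norm_neg]
    refine le_trans (norm_sum_le _ _) (Finset.sum_le_sum fun i _ => ?_)
    rw [norm_mul]
    exact mul_le_mul_of_nonneg_left (hphib _) (norm_nonneg _)
  -- convert to coefficients of q
  have hA : ∀ i : ℕ, ‖q.coeff (i+1)‖
      = (((i+1+j).descFactorial j : ℕ) : ℝ) * ‖p.coeff (i+1+j)‖ := by
    intro i
    have h1 := Polynomial.coeff_iterate_derivative (k := j) p (i+1)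
    rw [hq, h1, nsmul_eq_mul, norm_mul, Complex.norm_natCast]
  have hA0 : ‖q.coeff 0‖ = ((j.factorial : ℕ) : ℝ) * ‖p.coeff j‖ := by
    have h1 := Polynomial.coeff_iterate_derivative (k := j) p 0
    rw [zero_add, Nat.descFactorial_self] at h1
    rw [hq, h1, nsmul_eq_mul, norm_mul, Complex.norm_natCast]
  have hmain : ‖q.coeff 0‖ ≤ ∑ i ∈ range m, ‖q.coeff (i+1)‖ := by
    rw [hA0]
    calc ((j.factorial : ℕ) : ℝ) * ‖p.coeff j‖
        ≤ ((j.factorial : ℕ) : ℝ) *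
            ∑ i ∈ range m, ‖p.coeff (j + (i+1))‖ * (((j + (i+1)).choose j : ℕ) : ℝ) := by
          exact mul_le_mul_of_nonneg_left habs1 (by positivity)
      _ = ∑ i ∈ range m, ‖q.coeff (i+1)‖ := by
          rw [Finset.mul_sum]
          refine Finset.sum_congr rfl fun i _ => ?_
          rw [hA i]
          have hix : i + 1 + j = j + (i+1) := by omega
          rw [hix, Nat.descFactorial_eq_factorial_mul_choose]
          push_cast
          ring
  have hmR : (0:ℝ) < (m:ℝ) := by exact_mod_cast hm1
  have hxpos : (0:ℝ) < 1 + 1/R := by positivity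
  have he5 : (1 + 1/R)^m < 2 := by
    have h1 : Real.log ((1+1/R)^m) = m * Real.log (1+1/R) := Real.log_pow _ m
    have h2 : Real.log (1+1/R) ≤ 1/R := by
      have := Real.log_le_sub_one_of_pos hxpos
      linarith
    have h3 : (m:ℝ) * (1/R) = Real.log 2 / 2 := by
      rw [hR, hcast]
      field_simp
    have h4 : Real.log ((1+1/R)^m) < Real.log 2 := by
      rw [h1]
      calc (m:ℝ) * Real.log (1+1/R) ≤ m * (1/R) :=
            mul_le_mul_of_nonneg_left h2 (le_of_lt hmR)
        _ = Real.log 2 / 2 := h3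
        _ < Real.log 2 := by linarith
    exact (Real.log_lt_log_iff (by positivity) (by norm_num)).mp h4
  exact kak_roots_side q m hq0 hqdeg R hRpos he5 hcon hmain
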